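/- Let q be a norm on the space of complex polynomials of one variable such that q(P') ≤ M (deg P)^m q(P) for all polynomials P, where M > 0 and m ≥ 1. Then for every n ≥ 1 and r ≥ 0, v_n(q,r) := (1/n) log sup{ sup_{|ζ|≤r} q(P(·+ζ)) : deg P ≤ n, q(P) ≤ 1 } satisfies v_n(q,r) ≤ M n^{m-1} r. -/

import Mathlib

open Polynomial Real

lemma taylor_expand (f : Polynomial ℂ) (ζ : ℂ) (N : ℕ) (hN : f.natDegree ≤ N) :
    f.comp (Polynomial.X + Polynomial.C ζ)
      = ∑ k ∈ Finset.range (N + 1), (ζ ^ k) • Polynomial.hasseDeriv k f := by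
  rw [← taylor_apply]
  ext j
  rw [taylor_coeff, finset_sum_coeff]
  rw [eval_eq_sum_range' (n := N + 1) (lt_of_le_of_lt
    ((natDegree_hasseDeriv_le f j).trans (Nat.sub_le _ _)) (Nat.lt_succ_of_le hN)) ζ]
  refine Finset.sum_congr rfl fun k _ => ?_
  rw [coeff_smul, hasseDeriv_coeff, hasseDeriv_coeff, add_comm j k, Nat.choose_symm_add]
  simp [smul_eq_mul]
  ring

/-- if a norm `q` on complex polynomials satisfies the A. Markov type
inequality `q(P') ≤ M (deg P)^m q(P)`, then
`v_n(q,r) := (1/n) log sup{ q(P(·+ζ)) : |ζ| ≤ r, deg P ≤ n, q(P) ≤ 1 }`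
satisfies `v_n(q,r) ≤ M n^{m-1} r`. -/
theorem stmt2 (q : Polynomial ℂ → ℝ)
    (hq_add : ∀ P Q, q (P + Q) ≤ q P + q Q)
    (hq_smul : ∀ (c : ℂ) P, q (c • P) = ‖c‖ * q P)
    (hq_eq : ∀ P, q P = 0 ↔ P = 0)
    (M m : ℝ) (hM : 0 < M) (hm : 1 ≤ m)
    (hMarkov : ∀ P : Polynomial ℂ, q (Polynomial.derivative P) ≤
      M * (P.natDegree : ℝ) ^ m * q P)
    (n : ℕ) (hn : 1 ≤ n) (r : ℝ) (hr : 0 ≤ r) :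
    (1 / (n : ℝ)) * Real.log (sSup {x : ℝ | ∃ (P : Polynomial ℂ) (ζ : ℂ),
        P.natDegree ≤ n ∧ q P ≤ 1 ∧ ‖ζ‖ ≤ r ∧
        x = q (P.comp (Polynomial.X + Polynomial.C ζ))})
      ≤ M * (n : ℝ) ^ (m - 1) * r := by
  have hnpos : (0:ℝ) < n := by exact_mod_cast hn
  have q0 : q 0 = 0 := (hq_eq 0).2 rfl
  have qnonneg : ∀ P, 0 ≤ q P := by
    intro P
    have h1 : q ((-1 : ℂ) • P) = q P := by rw [hq_smul]; simp
    have h2 := hq_add P ((-1 : ℂ) • P)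
    simp only [neg_one_smul, add_neg_cancel, q0] at h2
    rw [neg_one_smul] at h1
    linarith [h1 ▸ h2]
  have hnm : (0:ℝ) ≤ M * (n:ℝ) ^ m := by positivity
  -- iterated derivative bound
  have key : ∀ P : Polynomial ℂ, P.natDegree ≤ n → ∀ k,
      q ((⇑Polynomial.derivative)^[k] P) ≤ (M * (n:ℝ) ^ m) ^ k * q P := by
    intro P hP k
    induction k with
    | zero => simp
    | succ k ih =>
      rw [Function.iterate_succ_apply']
      have hdeg : ((⇑Polynomial.derivative)^[k] P).natDegree ≤ n :=
        ((P.natDegree_iterate_derivative k).trans (Nat.sub_le _ _)).trans hP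
      calc q (Polynomial.derivative ((⇑Polynomial.derivative)^[k] P))
          ≤ M * (((⇑Polynomial.derivative)^[k] P).natDegree : ℝ) ^ m *
            q ((⇑Polynomial.derivative)^[k] P) := hMarkov _
        _ ≤ M * (n:ℝ) ^ m * q ((⇑Polynomial.derivative)^[k] P) := by
            have : (((⇑Polynomial.derivative)^[k] P).natDegree : ℝ) ^ m ≤ (n:ℝ) ^ m :=
              Real.rpow_le_rpow (by positivity) (by exact_mod_cast hdeg) (by linarith)
            exact mul_le_mul_of_nonneg_right
              (mul_le_mul_of_nonneg_left this hM.le) (qnonneg _)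
        _ ≤ M * (n:ℝ) ^ m * ((M * (n:ℝ) ^ m) ^ k * q P) := by
            have := mul_le_mul_of_nonneg_left ih hnm
            linarith
        _ = (M * (n:ℝ) ^ m) ^ (k + 1) * q P := by ring
  -- triangle inequality for finite sums
  have qsum : ∀ (s : Finset ℕ) (f : ℕ → Polynomial ℂ),
      q (∑ i ∈ s, f i) ≤ ∑ i ∈ s, q (f i) := by
    intro s f
    induction s using Finset.induction with
    | empty => simp [q0]
    | insert a s hx ih =>
      rw [Finset.sum_insert hx, Finset.sum_insert hx]
      exact (hq_add _ _).trans (by linarith)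
  set A : ℝ := M * (n:ℝ) ^ m * r with hA
  have hA0 : 0 ≤ A := by positivity
  -- main bound on elements of the set
  have hbound : ∀ x ∈ {x : ℝ | ∃ (P : Polynomial ℂ) (ζ : ℂ),
      P.natDegree ≤ n ∧ q P ≤ 1 ∧ ‖ζ‖ ≤ r ∧
      x = q (P.comp (Polynomial.X + Polynomial.C ζ))}, x ≤ Real.exp A := by
    rintro x ⟨P, ζ, hPn, hP1, hζ, rfl⟩
    rw [taylor_expand P ζ n hPn]
    calc q (∑ k ∈ Finset.range (n + 1), (ζ ^ k) • Polynomial.hasseDeriv k P)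
        ≤ ∑ k ∈ Finset.range (n + 1), q ((ζ ^ k) • Polynomial.hasseDeriv k P) := qsum _ _
      _ ≤ ∑ k ∈ Finset.range (n + 1), A ^ k / (Nat.factorial k : ℝ) := by
          refine Finset.sum_le_sum fun k _ => ?_
          have hfac : (Nat.factorial k : ℝ) * q (Polynomial.hasseDeriv k P)
              = q ((⇑Polynomial.derivative)^[k] P) := by
            have h1 : (Nat.factorial k : ℂ) • Polynomial.hasseDeriv k P
                = (⇑Polynomial.derivative)^[k] P := by
              rw [Nat.cast_smul_eq_nsmul, ← Polynomial.factorial_smul_hasseDeriv]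
              rfl
            have := hq_smul (Nat.factorial k : ℂ) (Polynomial.hasseDeriv k P)
            rw [h1] at this
            rw [this, Complex.norm_natCast]
          have hfacpos : (0:ℝ) < (Nat.factorial k : ℝ) := by
            exact_mod_cast Nat.factorial_pos k
          have hq_h : q (Polynomial.hasseDeriv k P)
              ≤ (M * (n:ℝ) ^ m) ^ k * q P / (Nat.factorial k : ℝ) := by
            rw [le_div_iff₀ hfacpos, mul_comm _ ((Nat.factorial k : ℝ)), hfac]
            exact key P hPn k
          rw [hq_smul, norm_pow]
          have h1 : ‖ζ‖ ^ k ≤ r ^ k := pow_le_pow_left₀ (norm_nonneg _) hζ k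
          calc ‖ζ‖ ^ k * q (Polynomial.hasseDeriv k P)
              ≤ r ^ k * ((M * (n:ℝ) ^ m) ^ k * q P / (Nat.factorial k : ℝ)) := by
                apply mul_le_mul h1 hq_h (qnonneg _) (by positivity)
            _ ≤ r ^ k * ((M * (n:ℝ) ^ m) ^ k * 1 / (Nat.factorial k : ℝ)) := by
                have : (M * (n:ℝ) ^ m) ^ k * q P ≤ (M * (n:ℝ) ^ m) ^ k * 1 :=
                  mul_le_mul_of_nonneg_left hP1 (by positivity)
                apply mul_le_mul_of_nonneg_left _ (by positivity)
                apply div_le_div_of_nonneg_right this hfacpos.le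
            _ = A ^ k / (Nat.factorial k : ℝ) := by rw [hA]; ring
      _ ≤ Real.exp A := Real.sum_le_exp_of_nonneg hA0 _
  have hsup : sSup {x : ℝ | ∃ (P : Polynomial ℂ) (ζ : ℂ),
      P.natDegree ≤ n ∧ q P ≤ 1 ∧ ‖ζ‖ ≤ r ∧
      x = q (P.comp (Polynomial.X + Polynomial.C ζ))} ≤ Real.exp A :=
    Real.sSup_le hbound (Real.exp_pos A).le
  have hlog : Real.log (sSup {x : ℝ | ∃ (P : Polynomial ℂ) (ζ : ℂ),
      P.natDegree ≤ n ∧ q P ≤ 1 ∧ ‖ζ‖ ≤ r ∧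
      x = q (P.comp (Polynomial.X + Polynomial.C ζ))}) ≤ A := by
    have hmem : (0:ℝ) ∈ {x : ℝ | ∃ (P : Polynomial ℂ) (ζ : ℂ),
        P.natDegree ≤ n ∧ q P ≤ 1 ∧ ‖ζ‖ ≤ r ∧
        x = q (P.comp (Polynomial.X + Polynomial.C ζ))} :=
      ⟨0, 0, by simp [q0, hr]⟩
    have hs0 : (0:ℝ) ≤ sSup {x : ℝ | ∃ (P : Polynomial ℂ) (ζ : ℂ),
        P.natDegree ≤ n ∧ q P ≤ 1 ∧ ‖ζ‖ ≤ r ∧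
        x = q (P.comp (Polynomial.X + Polynomial.C ζ))} :=
      le_csSup ⟨Real.exp A, hbound⟩ hmem
    by_cases h : sSup {x : ℝ | ∃ (P : Polynomial ℂ) (ζ : ℂ),
        P.natDegree ≤ n ∧ q P ≤ 1 ∧ ‖ζ‖ ≤ r ∧
        x = q (P.comp (Polynomial.X + Polynomial.C ζ))} ≤ 1
    · exact (Real.log_nonpos hs0 h).trans hA0
    · push_neg at h
      calc Real.log _ ≤ Real.log (Real.exp A) :=
          Real.log_le_log (by linarith) hsup
        _ = A := Real.log_exp A
  have hfinal : (1 / (n:ℝ)) * A = M * (n:ℝ) ^ (m - 1) * r := by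
    rw [hA]
    have : (n:ℝ) ^ m = (n:ℝ) ^ (m - 1) * (n:ℝ) := by
      rw [← Real.rpow_add_one (ne_of_gt hnpos) (m - 1)]
      congr 1
      ring
    rw [this]
    field_simp
  calc (1 / (n:ℝ)) * Real.log _ ≤ (1 / (n:ℝ)) * A := by
        apply mul_le_mul_of_nonneg_left hlog (by positivity)
    _ = M * (n:ℝ) ^ (m - 1) * r := hfinal
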